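/- arXiv:1204.5075 — 4 statements merged into one kernel-verified Lean document; each statement's English description precedes it below -/
import Mathlib

section
/- Let F be a free group of rank at least 2. Then the set NE ⊆ F × F is not equational; that is, for every natural number N there exists a finite sequence q₁, …, q_m of elements of F with m > N such that the partial intersections ⋂_{i=1}^{j} NE_{q_i} (for j = 1, …, m) form a strictly decreasing sequence of subsets of F. -/
open FirstOrder

/-- The definable set `NE ⊆ F × F`: pairs `(p, q)` such that `q·p = x₁^10·x₂^{-9}`
for some non-commuting `x₁, x₂`. -/
def NE (F : Type*) [Group F] : Set (F × F) :=
  {pq | ∃ x₁ x₂ : F, pq.2 * pq.1 = x₁ ^ 10 * x₂ ^ (-9 : ℤ) ∧ x₁ * x₂ ≠ x₂ * x₁}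

/-- The fiber `D_q = {p | (p, q) ∈ D}` of a relation `D ⊆ F × F`. -/
def fiber {F : Type*} (D : Set (F × F)) (q : F) : Set F := {p | (p, q) ∈ D}

/-- A relation `D ⊆ F × F` is equational if there is a uniform bound `N` on the length of
sequences `q₁, …, q_m` whose partial intersections `⋂_{i ≤ j} D_{q_i}` are strictly decreasing. -/
def IsEquational {F : Type*} (D : Set (F × F)) : Prop :=
  ∃ N : ℕ, ∀ (m : ℕ) (q : Fin m → F),
    StrictAnti (fun j : Fin m => ⋂ i ∈ Finset.Iic j, fiber D (q i)) → m ≤ N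


/-- The integer Heisenberg group, used as a certificate of non-commutation. -/
structure Heis where
  x : ℤ
  y : ℤ
  z : ℤ

namespace Heis

@[ext] lemma ext' {a b : Heis} (h1 : a.x = b.x) (h2 : a.y = b.y) (h3 : a.z = b.z) : a = b := by
  cases a; cases b; simp_all

instance : Mul Heis := ⟨fun a b => ⟨a.x + b.x, a.y + b.y, a.z + b.z + a.x * b.y⟩⟩
instance : One Heis := ⟨⟨0, 0, 0⟩⟩
instance : Inv Heis := ⟨fun a => ⟨-a.x, -a.y, -a.z + a.x * a.y⟩⟩

@[simp] lemma mul_x (a b : Heis) : (a * b).x = a.x + b.x := rfl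
@[simp] lemma mul_y (a b : Heis) : (a * b).y = a.y + b.y := rfl
@[simp] lemma mul_z (a b : Heis) : (a * b).z = a.z + b.z + a.x * b.y := rfl
@[simp] lemma one_x : (1 : Heis).x = 0 := rfl
@[simp] lemma one_y : (1 : Heis).y = 0 := rfl
@[simp] lemma one_z : (1 : Heis).z = 0 := rfl
@[simp] lemma inv_x (a : Heis) : (a⁻¹).x = -a.x := rfl
@[simp] lemma inv_y (a : Heis) : (a⁻¹).y = -a.y := rfl
@[simp] lemma inv_z (a : Heis) : (a⁻¹).z = -a.z + a.x * a.y := rfl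

instance : Group Heis where
  mul_assoc a b c := by ext <;> simp <;> ring
  one_mul a := by ext <;> simp
  mul_one a := by ext <;> simp
  inv_mul_cancel a := by ext <;> simp <;> ring

/-- generator A -/
def A : Heis := ⟨1, 0, 0⟩
/-- generator B -/
def B : Heis := ⟨0, 1, 0⟩

lemma A_pow (k : ℕ) : A ^ k = ⟨k, 0, 0⟩ := by
  induction k with
  | zero => rfl
  | succ n ih => rw [pow_succ, ih]; ext <;> simp [A] <;> push_cast <;> ring

lemma B_pow (k : ℕ) : B ^ k = ⟨0, k, 0⟩ := by
  induction k with
  | zero => rfl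
  | succ n ih => rw [pow_succ, ih]; ext <;> simp [B] <;> push_cast <;> ring

lemma noncomm (k : ℕ) (hk : 1 ≤ k) : A ^ k * B ^ k ≠ B ^ k * A ^ k := by
  rw [A_pow, B_pow]
  intro h
  have h3 := congrArg Heis.z h
  simp at h3
  have hk' : (k : ℤ) ≠ 0 := by positivity
  exact hk' (by nlinarith [h3])

end Heis

open FreeGroup

/-- In a free group over a subsingleton type, any two elements commute. -/
lemma FreeGroup.commute_of_subsingleton {S : Type*} [Subsingleton S]
    (u v : FreeGroup S) : Commute u v := by
  have key : ∀ w u : FreeGroup S, Commute u w := by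
    intro w
    induction w using FreeGroup.induction_on with
    | C1 => exact fun u => Commute.one_right u
    | of s =>
      intro u
      induction u using FreeGroup.induction_on with
      | C1 => exact Commute.one_left _
      | of t => rw [Subsingleton.elim t s]
      | inv_of t ih => exact ih.inv_left
      | mul a b ha hb => exact ha.mul_left hb
    | inv_of s ih => exact fun u => (ih u).inv_right
    | mul a b ha hb => exact fun u => (ha u).mul_right (hb u)
  exact key v u

section Coord

variable {G : Type*} [Group G]

/-- The "zero set" of an additive functional is a subgroup. -/
def zeroSubgroup (c : G → ℤ) (hc : ∀ g h : G, c (g * h) = c g + c h) : Subgroup G where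
  carrier := {g | c g = 0}
  one_mem' := by
    have := hc 1 1
    simp only [one_mul] at this
    simpa using by omega
  mul_mem' := by
    intro a b ha hb
    simp only [Set.mem_setOf_eq] at *
    rw [hc a b, ha, hb]; ring
  inv_mem' := by
    intro a ha
    have h1 : c 1 = 0 := by have := hc 1 1; simp only [one_mul] at this; omega
    have := hc a⁻¹ a
    simp only [inv_mul_cancel, h1] at this
    simp only [Set.mem_setOf_eq] at *
    omega

lemma zeroSubgroup_eq_top {c : G → ℤ} {hc : ∀ g h : G, c (g * h) = c g + c h}
    {x y : G} (htop : Subgroup.closure ({x, y} : Set G) = ⊤)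
    (hx : c x = 0) (hy : c y = 0) (g : G) : c g = 0 := by
  have hle : Subgroup.closure ({x, y} : Set G) ≤ zeroSubgroup c hc := by
    rw [Subgroup.closure_le]
    rintro g (rfl | rfl)
    · exact hx
    · exact hy
  rw [htop] at hle
  exact hle (Subgroup.mem_top g)

end Coord

/-- In a free group, `x ^ 10 = y ^ 9` implies `x` and `y` commute, provided they generate. -/
lemma commute_of_pow_eq_pow_gen {G : Type*} [Group G] [IsFreeGroup G] {x y : G}
    (htop : Subgroup.closure ({x, y} : Set G) = ⊤) (h : x ^ (10 : ℕ) = y ^ (9 : ℕ)) :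
    Commute x y := by
  classical
  cases subsingleton_or_nontrivial (IsFreeGroup.Generators G) with
  | inl hs =>
    have e := IsFreeGroup.toFreeGroup G
    have hc := (FreeGroup.commute_of_subsingleton (e x) (e y)).map e.symm.toMonoidHom
    simpa using hc
  | inr hn =>
    exfalso
    obtain ⟨s₁, s₂, hss⟩ := Nontrivial.exists_pair_ne (α := IsFreeGroup.Generators G)
    -- coordinate functionals
    set c : IsFreeGroup.Generators G → G → ℤ := fun s g =>
      Multiplicative.toAdd
        ((IsFreeGroup.lift (fun t => Multiplicative.ofAdd (if t = s then (1 : ℤ) else 0))) g)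
      with hcdef
    have hadd : ∀ s, ∀ g h : G, c s (g * h) = c s g + c s h := by
      intro s g h; simp [hcdef]
    have hof : ∀ s t, c s (IsFreeGroup.of t) = if t = s then 1 else 0 := by
      intro s t; simp [hcdef]
    have hpow : ∀ s (g : G) (n : ℕ), c s (g ^ n) = n * c s g := by
      intro s g n
      induction n with
      | zero =>
        have := hadd s 1 1
        simp only [one_mul] at this
        simpa using by omega
      | succ m ih => rw [pow_succ, hadd, ih]; push_cast; ring
    have heq : ∀ s, 10 * c s x = 9 * c s y := by
      intro s
      have := hpow s x 10
      rw [h, hpow s y 9] at this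
      push_cast at this
      linarith
    set t : IsFreeGroup.Generators G → ℤ := fun s => c s y - c s x with htdef
    have hx9 : ∀ s, c s x = 9 * t s := by intro s; have := heq s; simp [htdef]; linarith
    have hy10 : ∀ s, c s y = 10 * t s := by intro s; have := heq s; simp [htdef]; linarith
    -- the combined functional kills x and y, hence everything
    set d : G → ℤ := fun g => t s₂ * c s₁ g - t s₁ * c s₂ g with hddef
    have hdadd : ∀ g h : G, d (g * h) = d g + d h := by
      intro g h; simp [hddef, hadd]; ring
    have hdx : d x = 0 := by simp [hddef, hx9]; ring
    have hdy : d y = 0 := by simp [hddef, hy10]; ring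
    have hd1 : d (IsFreeGroup.of s₁) = 0 := zeroSubgroup_eq_top (hc := hdadd) htop hdx hdy _
    have hd2 : d (IsFreeGroup.of s₂) = 0 := zeroSubgroup_eq_top (hc := hdadd) htop hdx hdy _
    rw [hddef] at hd1 hd2
    simp only [hof, if_pos rfl, if_neg hss, if_neg (Ne.symm hss)] at hd1 hd2
    -- hence t s₁ = t s₂ = 0, so c s₁ kills x and y, hence everything; contradiction
    have ht1 : t s₁ = 0 := by simp at hd1 hd2; linarith
    have hcx : c s₁ x = 0 := by rw [hx9, ht1]; ring
    have hcy : c s₁ y = 0 := by rw [hy10, ht1]; ring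
    have : c s₁ (IsFreeGroup.of s₁) = 0 := zeroSubgroup_eq_top (hc := hadd s₁) htop hcx hcy _
    rw [hof, if_pos rfl] at this
    omega

/-- In a free group, `x ^ 10 = y ^ 9` implies `x` and `y` commute. -/
lemma FreeGroup.commute_of_pow_eq_pow {α : Type*} {x y : FreeGroup α}
    (h : x ^ (10 : ℕ) = y ^ (9 : ℕ)) : Commute x y := by
  set H := Subgroup.closure ({x, y} : Set (FreeGroup α)) with hH
  have hx : x ∈ H := Subgroup.subset_closure (by simp)
  have hy : y ∈ H := Subgroup.subset_closure (by simp)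
  set x' : H := ⟨x, hx⟩
  set y' : H := ⟨y, hy⟩
  have htop : Subgroup.closure ({x', y'} : Set H) = ⊤ := by
    have hpre : ((↑) : H → FreeGroup α) ⁻¹' ({x, y} : Set (FreeGroup α))
        = ({x', y'} : Set H) := by
      ext ⟨g, hg⟩
      simp [x', y', Subtype.ext_iff]
    rw [← hpre]
    exact Subgroup.closure_closure_coe_preimage
  have h' : x' ^ (10 : ℕ) = y' ^ (9 : ℕ) := by
    ext
    push_cast
    exact h
  have hcomm := commute_of_pow_eq_pow_gen htop h'
  have := congrArg ((↑) : H → FreeGroup α) hcomm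
  push_cast at this
  exact this

/-- Non-commutation certificate: `b^{9i} a^m b^{-9i}` and `b^m` do not commute for `m ≥ 1`. -/
lemma freeGroup_noncomm_key {α : Type*} {a b : α} (hab : a ≠ b) (i k : ℕ) :
    FreeGroup.of b ^ (9*i) * FreeGroup.of a ^ (k+1) * (FreeGroup.of b ^ (9*i))⁻¹
        * FreeGroup.of b ^ (k+1)
      ≠ FreeGroup.of b ^ (k+1)
        * (FreeGroup.of b ^ (9*i) * FreeGroup.of a ^ (k+1) * (FreeGroup.of b ^ (9*i))⁻¹) := by
  classical
  intro hcomm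
  have hthis := congrArg (FreeGroup.lift (fun c => if c = a then Heis.A else Heis.B)) hcomm
  simp [Ne.symm hab, Heis.A_pow, Heis.B_pow] at hthis
  have h3 := congrArg Heis.z hthis
  simp [Heis.mul_z, Heis.mul_x, Heis.mul_y, Heis.inv_z, Heis.inv_x, Heis.inv_y] at h3
  nlinarith [h3, sq_nonneg ((k:ℤ)+1)]

/-- The set `NE` in a free group of rank at least 2 is not equational: for every `N`
there is a sequence `q₁, …, q_m` with `m > N` whose partial intersections
`⋂_{i ≤ j} NE_{q_i}` are strictly decreasing. -/
theorem NE_not_equational {α : Type*} [Nontrivial α] (N : ℕ) :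
    ∃ (m : ℕ) (q : Fin m → FreeGroup α), N < m ∧
      StrictAnti (fun j : Fin m => ⋂ i ∈ Finset.Iic j, fiber (NE (FreeGroup α)) (q i)) := by
  classical
  obtain ⟨a, b, hab⟩ := exists_pair_ne α
  -- the sequence g n = a^{10n} * b^{-9n}, packaged opaquely with its two key properties
  obtain ⟨g, hmem, hnotmem⟩ :
      ∃ g : ℕ → FreeGroup α,
        (∀ i j : ℕ, i < j → g j ∈ fiber (NE (FreeGroup α)) (g i)⁻¹) ∧
        (∀ j : ℕ, g j ∉ fiber (NE (FreeGroup α)) (g j)⁻¹) := by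
    refine ⟨fun n => FreeGroup.of a ^ (10*n) * (FreeGroup.of b ^ (9*n))⁻¹, ?_, ?_⟩
    · intro i j hij
      obtain ⟨k, rfl⟩ : ∃ k, j = i + (k + 1) := ⟨j - i - 1, by omega⟩
      refine ⟨FreeGroup.of b ^ (9*i) * FreeGroup.of a ^ (k+1) * (FreeGroup.of b ^ (9*i))⁻¹,
        FreeGroup.of b ^ (k+1), ?_, freeGroup_noncomm_key hab i k⟩
      show (FreeGroup.of a ^ (10*i) * (FreeGroup.of b ^ (9*i))⁻¹)⁻¹ *
          (FreeGroup.of a ^ (10*(i+(k+1))) * (FreeGroup.of b ^ (9*(i+(k+1))))⁻¹) = _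
      rw [conj_pow]
      simp only [zpow_neg, ← zpow_natCast, ← zpow_mul, ← zpow_add]
      group
    · intro j ⟨x₁, x₂, heq, hnc⟩
      apply hnc
      rw [inv_mul_cancel] at heq
      have hpp : x₁ ^ (10:ℕ) = x₂ ^ (9:ℕ) := by
        have h2 := heq.symm
        rw [mul_eq_one_iff_eq_inv] at h2
        rw [h2, ← zpow_natCast x₂, ← zpow_neg]
        norm_num
      exact FreeGroup.commute_of_pow_eq_pow hpp
  refine ⟨N+1, fun i => (g i)⁻¹, Nat.lt_succ_self N, ?_⟩
  intro j j' hlt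
  rw [lt_iff_le_not_ge]
  constructor
  · intro p hp
    rw [Set.mem_iInter₂] at hp ⊢
    intro i hi
    exact hp i (Finset.mem_Iic.mpr (le_trans (Finset.mem_Iic.mp hi) (le_of_lt hlt)))
  · intro hle
    have hj1 : (↑j + 1 : ℕ) < N + 1 := by
      have h2 := j'.isLt
      have h3 : (j : ℕ) < (j' : ℕ) := hlt
      omega
    have hp_in : g (↑j + 1) ∈ ⋂ i ∈ Finset.Iic j, fiber (NE (FreeGroup α)) ((g ↑i)⁻¹) := by
      rw [Set.mem_iInter₂]
      intro i hi
      have h4' : i ≤ j := Finset.mem_Iic.mp hi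
      have h4 : (i : ℕ) ≤ (j : ℕ) := h4'
      exact hmem ↑i (↑j + 1) (by omega)
    have hp_out : g (↑j + 1) ∉ ⋂ i ∈ Finset.Iic j', fiber (NE (FreeGroup α)) ((g ↑i)⁻¹) := by
      intro hmem'
      rw [Set.mem_iInter₂] at hmem'
      have hle' : (⟨↑j + 1, hj1⟩ : Fin (N+1)) ≤ j' := by
        rw [Fin.le_def]
        have h3 : (j : ℕ) < (j' : ℕ) := hlt
        simpa using by omega
      exact hnotmem (↑j + 1) (hmem' ⟨↑j + 1, hj1⟩ (Finset.mem_Iic.mpr hle'))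
    exact hp_out (hle hp_in)
end

section
/- Let F be a free group of rank at least 2. Then NE is not a finite union of equational relations: there do not exist finitely many equational relations E₁, …, E_ℓ ⊆ F × F with NE = E₁ ∪ … ∪ E_ℓ. -/
set_option maxRecDepth 8000


open FirstOrder

section Auxiliary

open Subgroup

/-- Distinct generators of a free group do not commute. -/
lemma isFreeGroup_of_not_commute {G : Type*} [Group G] [IsFreeGroup G]
    {s t : IsFreeGroup.Generators G} (h : s ≠ t) :
    ¬ Commute (IsFreeGroup.of s) (IsFreeGroup.of t) := by
  classical
  intro hc
  have hmap := hc.map (IsFreeGroup.lift (fun x : IsFreeGroup.Generators G =>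
    if x = s then Equiv.swap (0 : Fin 3) 1 else if x = t then Equiv.swap (1 : Fin 3) 2 else 1))
  rw [IsFreeGroup.lift_of, IsFreeGroup.lift_of] at hmap
  simp only [if_pos rfl, if_neg h.symm, if_neg h] at hmap
  have := congrArg (fun e => e 0) (hmap : _ = _)
  simp [Equiv.swap_apply_def] at this

/-- In a free group over a subsingleton type, everything is a power of one element. -/
lemma freeGroup_subsingleton_cyclic {S : Type*} [Subsingleton S] :
    ∃ ζ : FreeGroup S, ∀ g : FreeGroup S, ∃ k : ℤ, g = ζ ^ k := by
  rcases isEmpty_or_nonempty S with hS | ⟨⟨s₀⟩⟩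
  · refine ⟨1, fun g => ⟨0, ?_⟩⟩
    induction g using FreeGroup.induction_on with
    | C1 => simp
    | of x => exact hS.elim x
    | inv_of x _ => exact hS.elim x
    | mul x y hx hy => simp [hx, hy]
  · refine ⟨FreeGroup.of s₀, fun g => ?_⟩
    induction g using FreeGroup.induction_on with
    | C1 => exact ⟨0, by simp⟩
    | of x => exact ⟨1, by rw [Subsingleton.elim x s₀, zpow_one]⟩
    | inv_of x _ => exact ⟨-1, by rw [Subsingleton.elim x s₀, zpow_neg, zpow_one]⟩
    | mul x y hx hy =>
      obtain ⟨k, rfl⟩ := hx; obtain ⟨l, rfl⟩ := hy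
      exact ⟨k + l, by rw [zpow_add]⟩

/-- Same, transported along `IsFreeGroup`. -/
lemma isFreeGroup_subsingleton_cyclic {G : Type*} [Group G] [IsFreeGroup G]
    [Subsingleton (IsFreeGroup.Generators G)] :
    ∃ ζ : G, ∀ g : G, ∃ k : ℤ, g = ζ ^ k := by
  obtain ⟨ζ, hζ⟩ := freeGroup_subsingleton_cyclic (S := IsFreeGroup.Generators G)
  refine ⟨IsFreeGroup.mulEquiv G ζ, fun g => ?_⟩
  obtain ⟨k, hk⟩ := hζ ((IsFreeGroup.mulEquiv G).symm g)
  exact ⟨k, by rw [← map_zpow, ← hk, MulEquiv.apply_symm_apply]⟩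

/-- The closure of two commuting elements is commutative. -/
lemma closure_pair_comm {G : Type*} [Group G] {u v : G} (h : Commute u v)
    {g₁ g₂ : G} (h₁ : g₁ ∈ closure ({u, v} : Set G)) (h₂ : g₂ ∈ closure ({u, v} : Set G)) :
    Commute g₁ g₂ := by
  have hle : closure ({u, v} : Set G) ≤ centralizer ({u, v} : Set G) := by
    rw [closure_le]
    rintro x (rfl | rfl) <;> rw [SetLike.mem_coe, mem_centralizer_iff] <;>
      rintro y (rfl | rfl)
    · rfl
    · exact h.symm
    · exact h
    · rfl
  have hg₂ := hle h₂
  rw [mem_centralizer_iff] at hg₂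
  have hle2 : closure ({u, v} : Set G) ≤ centralizer ({g₂} : Set G) := by
    rw [closure_le]
    rintro x hx
    rw [SetLike.mem_coe, mem_centralizer_iff]
    rintro y rfl
    exact (hg₂ x hx).symm
  have hfin := hle2 h₁
  rw [mem_centralizer_iff] at hfin
  exact (hfin g₂ rfl).symm

/-- Two commuting elements of a free group are powers of a common element
(using the Nielsen–Schreier theorem). -/
lemma commute_exists_common_root {α : Type*} {u v : FreeGroup α} (h : Commute u v) :
    ∃ (z : FreeGroup α) (m n : ℤ), u = z ^ m ∧ v = z ^ n := by
  classical
  set H : Subgroup (FreeGroup α) := closure ({u, v} : Set (FreeGroup α)) with hH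
  have hu : u ∈ H := subset_closure (by simp)
  have hv : v ∈ H := subset_closure (by simp)
  have hsub : Subsingleton (IsFreeGroup.Generators H) := by
    by_contra hns
    rw [not_subsingleton_iff_nontrivial] at hns
    obtain ⟨s, t, hst⟩ := hns
    exact isFreeGroup_of_not_commute hst
      (Subtype.ext_iff.mpr <| closure_pair_comm h (IsFreeGroup.of s).2 (IsFreeGroup.of t).2)
  obtain ⟨ζ, hζ⟩ := isFreeGroup_subsingleton_cyclic (G := H)
  obtain ⟨m, hm⟩ := hζ ⟨u, hu⟩
  obtain ⟨n, hn⟩ := hζ ⟨v, hv⟩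
  exact ⟨(ζ : FreeGroup α), m, n,
    by simpa using congrArg (Subtype.val) hm,
    by simpa using congrArg (Subtype.val) hn⟩

/-- In a free group, `x ^ 10 = y ^ 9` implies that `x` and `y` commute. -/
lemma pow_eq_pow_commute {α : Type*} {x y : FreeGroup α} (hxy : x ^ 10 = y ^ 9) :
    Commute x y := by
  classical
  set H : Subgroup (FreeGroup α) := closure ({x, y} : Set (FreeGroup α)) with hH
  have hx : x ∈ H := subset_closure (by simp)
  have hy : y ∈ H := subset_closure (by simp)
  by_cases hsub : Subsingleton (IsFreeGroup.Generators H)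
  · obtain ⟨ζ, hζ⟩ := isFreeGroup_subsingleton_cyclic (G := H)
    obtain ⟨m, hm⟩ := hζ ⟨x, hx⟩
    obtain ⟨n, hn⟩ := hζ ⟨y, hy⟩
    have hx' : x = (ζ : FreeGroup α) ^ m := by simpa using congrArg Subtype.val hm
    have hy' : y = (ζ : FreeGroup α) ^ n := by simpa using congrArg Subtype.val hn
    rw [hx', hy']
    exact (Commute.refl _).zpow_zpow m n
  exfalso
  rw [not_subsingleton_iff_nontrivial] at hsub
  obtain ⟨s, t, hst⟩ := hsub
  set C := Multiplicative (ZMod 2 × ZMod 2) with hC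
  set c₁ : C := Multiplicative.ofAdd ((1, 0) : ZMod 2 × ZMod 2) with hc₁
  set c₂ : C := Multiplicative.ofAdd ((0, 1) : ZMod 2 × ZMod 2) with hc₂
  set φ : H →* C := IsFreeGroup.lift (fun g : IsFreeGroup.Generators H =>
    if g = s then c₁ else if g = t then c₂ else 1) with hφ
  have hsq : ∀ c : C, c * c = 1 := by decide
  set x' : H := ⟨x, hx⟩ with hx'
  set y' : H := ⟨y, hy⟩ with hy'
  have hrel : x' ^ 10 = y' ^ 9 := Subtype.ext (by
    push_cast
    simpa using hxy)
  have hY : φ y' = 1 := by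
    have h10 : φ x' ^ 10 = 1 := by
      rw [show (10 : ℕ) = 2 * 5 from rfl, pow_mul, pow_two, hsq, one_pow]
    have h9 : φ y' ^ 9 = φ y' := by
      rw [show (9 : ℕ) = 2 * 4 + 1 from rfl, pow_add, pow_mul, pow_two, hsq, one_pow,
        pow_one, one_mul]
    have := congrArg φ hrel
    rw [map_pow, map_pow, h10, h9] at this
    exact this.symm
  have hset : ((Subtype.val ⁻¹' ({x, y} : Set (FreeGroup α))) : Set H) = {x', y'} := by
    ext g
    simp only [Set.mem_preimage, Set.mem_insert_iff, Set.mem_singleton_iff]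
    constructor
    · rintro (h1 | h1)
      · left; exact Subtype.ext h1
      · right; exact Subtype.ext h1
    · rintro (rfl | rfl)
      · left; rfl
      · right; rfl
  have htop : closure ({x', y'} : Set H) = ⊤ := by
    rw [← hset]
    exact closure_closure_coe_preimage
  have hmem : ∀ h : H, φ h = 1 ∨ φ h = φ x' := by
    intro h
    have hh : h ∈ closure ({x', y'} : Set H) := by rw [htop]; trivial
    induction hh using closure_induction with
    | mem g hg =>
      rcases hg with rfl | rfl
      · right; rfl
      · left; exact hY
    | one => left; exact map_one φ
    | mul a b _ _ ha hb =>
      rcases ha with ha | ha <;> rcases hb with hb | hb <;> rw [map_mul, ha, hb]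
      · left; rw [one_mul]
      · right; rw [one_mul]
      · right; rw [mul_one]
      · left; exact hsq _
    | inv a _ ha =>
      rcases ha with ha | ha <;> rw [map_inv, ha]
      · left; exact inv_one
      · right; exact inv_eq_of_mul_eq_one_left (hsq _)
  have h1 : φ (IsFreeGroup.of s) = c₁ := by rw [hφ, IsFreeGroup.lift_of, if_pos rfl]
  have h2 : φ (IsFreeGroup.of t) = c₂ := by
    rw [hφ, IsFreeGroup.lift_of, if_neg hst.symm, if_pos rfl]
  have hc1ne : c₁ ≠ 1 := by decide
  have hc2ne : c₂ ≠ 1 := by decide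
  have hc12 : c₁ ≠ c₂ := by decide
  rcases hmem (IsFreeGroup.of s) with hs1 | hs1
  · exact hc1ne (h1 ▸ hs1)
  rcases hmem (IsFreeGroup.of t) with ht1 | ht1
  · exact hc2ne (h2 ▸ ht1)
  exact hc12 ((h1.symm.trans hs1).trans (ht1.symm.trans h2))

/-- The specific witnesses used below do not commute. -/
lemma witnesses_not_commute {α : Type*} {a b : α} (hab : a ≠ b) {i j : ℕ} (hij : i ≠ j) :
    ¬ Commute (((FreeGroup.of a) ^ i * FreeGroup.of b) ^ 9)
      (((FreeGroup.of a) ^ j * FreeGroup.of b) ^ 10) := by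
  classical
  intro hc
  obtain ⟨z, m, n, hu, hv⟩ := commute_exists_common_root hc
  set ψa : FreeGroup α →* Multiplicative ℤ :=
    FreeGroup.lift (fun x : α => Multiplicative.ofAdd (if x = a then (1 : ℤ) else 0)) with hψa
  set ψb : FreeGroup α →* Multiplicative ℤ :=
    FreeGroup.lift (fun x : α => Multiplicative.ofAdd (if x = b then (1 : ℤ) else 0)) with hψb
  set wa : ℤ := Multiplicative.toAdd (ψa z) with hwa
  set wb : ℤ := Multiplicative.toAdd (ψb z) with hwb
  have hψaA : ψa (FreeGroup.of a) = Multiplicative.ofAdd (1 : ℤ) := by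
    rw [hψa, FreeGroup.lift_apply_of, if_pos rfl]
  have hψaB : ψa (FreeGroup.of b) = Multiplicative.ofAdd (0 : ℤ) := by
    rw [hψa, FreeGroup.lift_apply_of, if_neg hab.symm]
  have hψbA : ψb (FreeGroup.of a) = Multiplicative.ofAdd (0 : ℤ) := by
    rw [hψb, FreeGroup.lift_apply_of, if_neg hab]
  have hψbB : ψb (FreeGroup.of b) = Multiplicative.ofAdd (1 : ℤ) := by
    rw [hψb, FreeGroup.lift_apply_of, if_pos rfl]
  have e1 : (9 : ℤ) * i = m * wa := by
    have := congrArg (fun g => Multiplicative.toAdd (ψa g)) hu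
    simpa [map_pow, map_mul, map_zpow, hψaA, hψaB, toAdd_pow, toAdd_zpow, toAdd_mul,
      smul_eq_mul, mul_comm] using this
  have e2 : (9 : ℤ) = m * wb := by
    have := congrArg (fun g => Multiplicative.toAdd (ψb g)) hu
    simpa [map_pow, map_mul, map_zpow, hψbA, hψbB, toAdd_pow, toAdd_zpow, toAdd_mul,
      smul_eq_mul, mul_comm] using this
  have e3 : (10 : ℤ) * j = n * wa := by
    have := congrArg (fun g => Multiplicative.toAdd (ψa g)) hv
    simpa [map_pow, map_mul, map_zpow, hψaA, hψaB, toAdd_pow, toAdd_zpow, toAdd_mul,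
      smul_eq_mul, mul_comm] using this
  have e4 : (10 : ℤ) = n * wb := by
    have := congrArg (fun g => Multiplicative.toAdd (ψb g)) hv
    simpa [map_pow, map_mul, map_zpow, hψbA, hψbB, toAdd_pow, toAdd_zpow, toAdd_mul,
      smul_eq_mul, mul_comm] using this
  have hdvd : wb ∣ 1 := by
    have h9 : wb ∣ 9 := Dvd.intro m (by linarith)
    have h10 : wb ∣ 10 := Dvd.intro n (by linarith)
    have := dvd_sub h10 h9
    norm_num at this
    exact this
  have hwb1 : wb = 1 ∨ wb = -1 := Int.isUnit_iff.mp (isUnit_of_dvd_one hdvd)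
  apply hij
  rcases hwb1 with h | h <;> rw [h] at e2 e4
  · have hm : m = 9 := by linarith
    have hn : n = 10 := by linarith
    rw [hm] at e1; rw [hn] at e3
    omega
  · have hm : m = -9 := by linarith
    have hn : n = -10 := by linarith
    rw [hm] at e1; rw [hn] at e3
    omega

/-- Majority color with respect to an ultrafilter. -/
lemma ultra_majority {ℓ : ℕ} (U : Ultrafilter ℕ) (f : ℕ → Fin ℓ) :
    ∃ a : Fin ℓ, {j | f j = a} ∈ U := by
  by_contra hcon
  push_neg at hcon
  have hco : ∀ a : Fin ℓ, {j | f j = a}ᶜ ∈ U := fun a =>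
    Ultrafilter.compl_mem_iff_notMem.mpr (hcon a)
  have hint : (⋂ a : Fin ℓ, {j | f j = a}ᶜ) ∈ U := Filter.iInter_mem.mpr hco
  obtain ⟨j, hj⟩ := Ultrafilter.nonempty_of_mem hint
  simp only [Set.mem_iInter, Set.mem_compl_iff, Set.mem_setOf_eq] at hj
  exact hj (f j) rfl

/-- Infinite Ramsey theorem for pairs, via an ultrafilter. -/
lemma ramsey_pairs {ℓ : ℕ} (c : ℕ → ℕ → Fin ℓ) :
    ∃ (a : Fin ℓ) (g : ℕ → ℕ), StrictMono g ∧ ∀ k n, k < n → c (g k) (g n) = a := by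
  classical
  set U := Filter.hyperfilter ℕ with hU
  choose aOf haOf using fun x => ultra_majority U (c x)
  obtain ⟨a, hI⟩ := ultra_majority U aOf
  set I₀ : Set ℕ := {x | aOf x = a} with hI₀
  refine ⟨a, ?_⟩
  set nextSet : (ℕ × Set ℕ) → Set ℕ :=
    fun p => p.2 ∩ {j | c p.1 j = a} ∩ Set.Ioi p.1 with hnextSet
  set P := {p : ℕ × Set ℕ // p.2 ∈ U ∧ p.2 ⊆ I₀ ∧ p.1 ∈ p.2} with hP
  have hIoi : ∀ x : ℕ, Set.Ioi x ∈ U := by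
    intro x
    have : (Set.Iic x)ᶜ ∈ Filter.cofinite := (Set.finite_Iic x).compl_mem_cofinite
    rw [Set.compl_Iic] at this
    exact Filter.hyperfilter_le_cofinite this
  have hnext : ∀ p : P, nextSet p.1 ∈ U ∧ nextSet p.1 ⊆ I₀ := by
    rintro ⟨⟨x, T⟩, hT, hsub, hx⟩
    constructor
    · refine Filter.inter_mem (Filter.inter_mem hT ?_) (hIoi x)
      have hax : aOf x = a := hsub hx
      simpa [hax] using haOf x
    · intro y hy
      exact hsub hy.1.1
  have step : ∀ p : P, {q : P // q.1.2 = nextSet p.1 ∧ q.1.1 ∈ nextSet p.1} := by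
    intro p
    obtain ⟨hmem, hsub⟩ := hnext p
    have hne := Ultrafilter.nonempty_of_mem hmem
    exact ⟨⟨⟨hne.choose, nextSet p.1⟩, hmem, hsub, hne.choose_spec⟩, rfl, hne.choose_spec⟩
  have base : P := by
    have hne := Ultrafilter.nonempty_of_mem hI
    exact ⟨⟨hne.choose, I₀⟩, hI, subset_rfl, hne.choose_spec⟩
  set st : ℕ → P := fun n => Nat.rec base (fun _ p => (step p).1) n with hst
  set g : ℕ → ℕ := fun n => (st n).1.1 with hg
  set T : ℕ → Set ℕ := fun n => (st n).1.2 with hT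
  have hstep : ∀ n, T (n + 1) = nextSet ((st n).1) ∧ g (n + 1) ∈ nextSet ((st n).1) :=
    fun n => (step (st n)).2
  have hginT : ∀ n, g n ∈ T n := fun n => (st n).2.2.2
  have hTdec : ∀ n, T (n + 1) ⊆ T n := by
    intro n y hy
    rw [(hstep n).1] at hy
    exact hy.1.1
  have hTcolor : ∀ n, T (n + 1) ⊆ {j | c (g n) j = a} := by
    intro n y hy
    rw [(hstep n).1] at hy
    exact hy.1.2
  have hTIoi : ∀ n, T (n + 1) ⊆ Set.Ioi (g n) := by
    intro n y hy
    rw [(hstep n).1] at hy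
    exact hy.2
  have hmono : ∀ n k, k ≤ n → T n ⊆ T k := by
    intro n
    induction n with
    | zero => intro k hk; rw [Nat.le_zero.mp hk]
    | succ n ih =>
      intro k hk
      rcases Nat.eq_or_lt_of_le hk with rfl | hk'
      · exact subset_rfl
      · exact (hTdec n).trans (ih k (Nat.lt_succ_iff.mp hk'))
  refine ⟨g, strictMono_nat_of_lt_succ fun n => hTIoi n (hginT (n + 1)), ?_⟩
  intro k n hkn
  exact hTcolor k (hmono n (k + 1) hkn (hginT n))

end Auxiliary

/-- `NE` is not a finite union of equational relations. -/
theorem NE_not_finite_union_equational {α : Type*} [Nontrivial α] :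
    ¬ ∃ (ℓ : ℕ) (E : Fin ℓ → Set (FreeGroup α × FreeGroup α)),
      (∀ a, IsEquational (E a)) ∧ NE (FreeGroup α) = ⋃ a, E a := by
  classical
  obtain ⟨a, b, hab⟩ := exists_pair_ne α
  rintro ⟨ℓ, E, hEq, hNE⟩
  set v : ℕ → FreeGroup α := fun i => (FreeGroup.of a) ^ i * FreeGroup.of b with hv
  set q : ℕ → FreeGroup α := fun i => (v i) ^ 90 with hq
  set p : ℕ → FreeGroup α := fun i => ((v i) ^ 90)⁻¹ with hp
  -- diagonal pairs are not in NE
  have hdiag : ∀ i, (p i, q i) ∉ NE (FreeGroup α) := by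
    rintro i ⟨x₁, x₂, hx, hcomm⟩
    simp only [hq, hp] at hx
    rw [mul_inv_cancel] at hx
    have h2 : x₁ ^ 10 = x₂ ^ 9 := by
      have h3 := hx.symm
      rw [show ((-9 : ℤ)) = -(9 : ℤ) from rfl, zpow_neg, show ((9 : ℤ)) = ((9 : ℕ) : ℤ) from rfl,
        zpow_natCast] at h3
      exact mul_inv_eq_one.mp h3
    exact hcomm (pow_eq_pow_commute h2)
  -- off-diagonal pairs are in NE
  have hoff : ∀ i j : ℕ, i ≠ j → (p j, q i) ∈ NE (FreeGroup α) := by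
    intro i j hij
    refine ⟨(v i) ^ 9, (v j) ^ 10, ?_, witnesses_not_commute hab hij⟩
    show q i * p j = _
    simp only [hq, hp]
    have h1 : ((v j ^ 10 : FreeGroup α)) ^ (-9 : ℤ) = (v j ^ 90)⁻¹ := by
      rw [show ((-9 : ℤ)) = -((9 : ℕ) : ℤ) from rfl, zpow_neg, zpow_natCast, ← pow_mul]
    rw [h1, ← pow_mul]
  -- the empty union is impossible
  rcases Nat.eq_zero_or_pos ℓ with rfl | hl
  · have h01 : (p 1, q 0) ∈ NE (FreeGroup α) := hoff 0 1 (by norm_num)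
    rw [hNE] at h01
    simpa using h01
  -- choose colors
  have hcolor : ∀ i j : ℕ, i ≠ j → ∃ t : Fin ℓ, p j ∈ fiber (E t) (q i) := by
    intro i j hij
    have h := hoff i j hij
    rw [hNE] at h
    rw [Set.mem_iUnion] at h
    exact h
  choose col hcol using hcolor
  set c : ℕ → ℕ → Fin ℓ := fun i j => if h : i ≠ j then col i j h else ⟨0, hl⟩ with hc'
  have hc : ∀ (i j : ℕ), i ≠ j → p j ∈ fiber (E (c i j)) (q i) := by
    intro i j h
    simp only [hc', dif_pos h]
    exact hcol i j h
  obtain ⟨t, g, hgmono, hgc⟩ := ramsey_pairs c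
  obtain ⟨N, hN⟩ := hEq t
  -- `E t` is contained in `NE`
  have hEsub : ∀ (x : FreeGroup α × FreeGroup α), x ∈ E t → x ∈ NE (FreeGroup α) := by
    intro x hx
    rw [hNE, Set.mem_iUnion]
    exact ⟨t, hx⟩
  -- build a strictly decreasing chain of length N + 1
  set m := N + 1 with hm
  have hanti : StrictAnti
      (fun j : Fin m => ⋂ i ∈ Finset.Iic j, fiber (E t) ((fun k : Fin m => q (g ↑k)) i)) := by
    intro j₁ j₂ hlt
    have hsub : (⋂ i ∈ Finset.Iic j₂, fiber (E t) (q (g ↑i)))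
        ⊆ ⋂ i ∈ Finset.Iic j₁, fiber (E t) (q (g ↑i)) := by
      intro w hw
      simp only [Set.mem_iInter] at hw ⊢
      intro i hi
      exact hw i (Finset.mem_Iic.mpr ((Finset.mem_Iic.mp hi).trans hlt.le))
    have hj1 : (↑j₁ : ℕ) + 1 < m := lt_of_le_of_lt (Nat.succ_le_of_lt hlt) j₂.isLt
    set w : FreeGroup α := p (g ((↑j₁ : ℕ) + 1)) with hw'
    have hw1 : w ∈ ⋂ i ∈ Finset.Iic j₁, fiber (E t) (q (g ↑i)) := by
      simp only [Set.mem_iInter]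
      intro i hi
      have hile : (↑i : ℕ) ≤ ↑j₁ := Fin.le_def.mp (Finset.mem_Iic.mp hi)
      have hlt' : (↑i : ℕ) < (↑j₁ : ℕ) + 1 := Nat.lt_succ_of_le hile
      have hne : g ↑i ≠ g ((↑j₁ : ℕ) + 1) := ne_of_lt (hgmono hlt')
      have := hc (g ↑i) (g ((↑j₁ : ℕ) + 1)) hne
      rwa [hgc ↑i ((↑j₁ : ℕ) + 1) hlt'] at this
    have hw2 : w ∉ ⋂ i ∈ Finset.Iic j₂, fiber (E t) (q (g ↑i)) := by
      intro hmem
      simp only [Set.mem_iInter] at hmem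
      have hk : (⟨(↑j₁ : ℕ) + 1, hj1⟩ : Fin m) ∈ Finset.Iic j₂ :=
        Finset.mem_Iic.mpr (by
          rw [Fin.le_def]
          exact Nat.succ_le_of_lt hlt)
      have := hmem _ hk
      exact hdiag (g ((↑j₁ : ℕ) + 1)) (hEsub _ this)
    refine lt_of_le_of_ne hsub fun heq => hw2 ?_
    have h' : (⋂ i ∈ Finset.Iic j₂, fiber (E t) (q (g ↑i)))
        = ⋂ i ∈ Finset.Iic j₁, fiber (E t) (q (g ↑i)) := heq
    rw [h']
    exact hw1
  have := hN m (fun k : Fin m => q (g ↑k)) hanti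
  omega
end

section
/- Let F be a free group of rank at least 2. Then NE is not a finite intersection of equational relations: there do not exist finitely many equational relations E₁, …, E_ℓ ⊆ F × F with NE = E₁ ∩ … ∩ E_ℓ. -/
open FirstOrder

/-! ### Auxiliary lemmas about free groups -/

/-- In a free group on a subsingleton type, everything commutes. -/
theorem freeGroup_subsingleton_comm {β : Type*} [Subsingleton β] (u v : FreeGroup β) :
    u * v = v * u := by
  rcases isEmpty_or_nonempty β with hβ | ⟨⟨b⟩⟩
  · have h : ∀ w : FreeGroup β, w = 1 := by
      intro w
      induction w using FreeGroup.induction_on with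
      | C1 => rfl
      | of x => exact hβ.elim x
      | inv_of x h => exact hβ.elim x
      | mul x y hx hy => rw [hx, hy, one_mul]
    rw [h u, h v]
  · have h : ∀ w : FreeGroup β, ∃ n : ℤ, w = FreeGroup.of b ^ n := by
      intro w
      induction w using FreeGroup.induction_on with
      | C1 => exact ⟨0, rfl⟩
      | of x => exact ⟨1, by rw [Subsingleton.elim x b]; rfl⟩
      | inv_of x h => obtain ⟨n, hn⟩ := h; exact ⟨-n, by rw [hn, zpow_neg]⟩
      | mul x y hx hy =>
        obtain ⟨n, hn⟩ := hx; obtain ⟨m, hm⟩ := hy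
        exact ⟨n + m, by rw [hn, hm, zpow_add]⟩
    obtain ⟨n, hn⟩ := h u; obtain ⟨m, hm⟩ := h v
    rw [hn, hm, ← zpow_add, ← zpow_add, add_comm]

/-- A free group cannot be generated by two elements `u, v` with `u ^ 10 = v ^ 9` if the
basis has two distinct elements (abelianization/determinant argument). -/
theorem freeGroup_pair_contra {β : Type*} (b₁ b₂ : β) (hb : b₁ ≠ b₂)
    (u v : FreeGroup β) (htop : Subgroup.closure ({u, v} : Set (FreeGroup β)) = ⊤)
    (h : u ^ 10 = v ^ 9) : False := by
  classical
  let f : β → Multiplicative (ℤ × ℤ) := fun x =>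
    Multiplicative.ofAdd (if x = b₁ then ((1 : ℤ), (0 : ℤ)) else if x = b₂ then (0, 1) else (0, 0))
  let Φ : FreeGroup β →* Multiplicative (ℤ × ℤ) := FreeGroup.lift f
  have hmem : ∀ x : β,
      Φ (FreeGroup.of x) ∈ Subgroup.closure ({Φ u, Φ v} : Set (Multiplicative (ℤ × ℤ))) := by
    intro x
    have : Φ (FreeGroup.of x) ∈ Subgroup.map Φ (Subgroup.closure {u, v}) := by
      rw [htop]; exact ⟨FreeGroup.of x, trivial, rfl⟩
    rwa [MonoidHom.map_closure, Set.image_pair] at this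
  obtain ⟨m, n, hmn⟩ := Subgroup.mem_closure_pair.mp (hmem b₁)
  obtain ⟨m', n', hmn'⟩ := Subgroup.mem_closure_pair.mp (hmem b₂)
  set U : ℤ × ℤ := Multiplicative.toAdd (Φ u) with hU
  set V : ℤ × ℤ := Multiplicative.toAdd (Φ v) with hV
  have hpow : (10 : ℤ) • U = (9 : ℤ) • V := by
    have := congrArg Multiplicative.toAdd (congrArg Φ h)
    simpa [map_pow, toAdd_pow, ← hU, ← hV] using this
  have h1 : m • U + n • V = ((1 : ℤ), (0 : ℤ)) := by
    have := congrArg Multiplicative.toAdd hmn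
    simpa [toAdd_zpow, Φ, FreeGroup.lift_apply_of, f, if_pos rfl] using this
  have h2 : m' • U + n' • V = ((0 : ℤ), (1 : ℤ)) := by
    have := congrArg Multiplicative.toAdd hmn'
    simpa [toAdd_zpow, Φ, FreeGroup.lift_apply_of, f, if_neg (Ne.symm hb), if_pos rfl] using this
  have e1 : m * U.1 + n * V.1 = 1 := by
    have := congrArg Prod.fst h1; simpa [smul_eq_mul] using this
  have e2 : m * U.2 + n * V.2 = 0 := by
    have := congrArg Prod.snd h1; simpa [smul_eq_mul] using this
  have e3 : m' * U.1 + n' * V.1 = 0 := by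
    have := congrArg Prod.fst h2; simpa [smul_eq_mul] using this
  have e4 : m' * U.2 + n' * V.2 = 1 := by
    have := congrArg Prod.snd h2; simpa [smul_eq_mul] using this
  have e5 : 10 * U.1 = 9 * V.1 := by
    have := congrArg Prod.fst hpow; simpa [smul_eq_mul] using this
  have e6 : 10 * U.2 = 9 * V.2 := by
    have := congrArg Prod.snd hpow; simpa [smul_eq_mul] using this
  have h7 : U.1 * V.2 - U.2 * V.1 = 0 := by
    have : 10 * (U.1 * V.2 - U.2 * V.1) = 0 := by linear_combination V.2 * e5 - V.1 * e6
    omega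
  have key : (m * U.1 + n * V.1) * (m' * U.2 + n' * V.2)
      - (m * U.2 + n * V.2) * (m' * U.1 + n' * V.1)
      = (m * n' - n * m') * (U.1 * V.2 - U.2 * V.1) := by ring
  rw [e1, e2, e3, e4, h7, mul_zero] at key
  simp at key

/-- In any free group, `u ^ 10 = v ^ 9` implies that `u` and `v` commute, provided
`u, v` generate the group. -/
theorem isFreeGroup_comm {G : Type*} [Group G] [IsFreeGroup G] (u v : G)
    (htop : Subgroup.closure ({u, v} : Set G) = ⊤) (h : u ^ 10 = v ^ 9) :
    u * v = v * u := by
  let e : G ≃* FreeGroup (IsFreeGroup.Generators G) := IsFreeGroup.toFreeGroup G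
  have htop' : Subgroup.closure ({e u, e v} : Set (FreeGroup (IsFreeGroup.Generators G))) = ⊤ := by
    have h1 : Subgroup.map e.toMonoidHom (Subgroup.closure {u, v}) = ⊤ := by
      rw [htop]
      exact Subgroup.map_top_of_surjective _ e.surjective
    rwa [MonoidHom.map_closure, Set.image_pair] at h1
  have h' : e u ^ 10 = e v ^ 9 := by rw [← map_pow, ← map_pow, h]
  rcases subsingleton_or_nontrivial (IsFreeGroup.Generators G) with _ | _
  · have := freeGroup_subsingleton_comm (e u) (e v)
    apply e.injective
    rw [map_mul, map_mul, this]
  · obtain ⟨b₁, b₂, hb⟩ := exists_pair_ne (IsFreeGroup.Generators G)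
    exact absurd h' (fun hc => freeGroup_pair_contra b₁ b₂ hb (e u) (e v) htop' hc)

/-- In a free group, `x ^ 10 = y ^ 9` implies `x * y = y * x` (Nielsen–Schreier). -/
theorem freeGroup_pow_eq_comm {α : Type*} (x y : FreeGroup α) (h : x ^ 10 = y ^ 9) :
    x * y = y * x := by
  set H : Subgroup (FreeGroup α) := Subgroup.closure {x, y} with hH
  have hx : x ∈ H := Subgroup.subset_closure (by simp)
  have hy : y ∈ H := Subgroup.subset_closure (by simp)
  set u : H := ⟨x, hx⟩
  set v : H := ⟨y, hy⟩
  have htop : Subgroup.closure ({u, v} : Set H) = ⊤ := by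
    have := Subgroup.closure_closure_coe_preimage (k := ({x, y} : Set (FreeGroup α)))
    convert this using 2
    ext g
    constructor
    · rintro (rfl | rfl) <;> simp [u, v]
    · rintro (hg | hg)
      · left; exact Subtype.ext hg
      · right; exact Subtype.ext hg
  have huv : u ^ 10 = v ^ 9 := by ext; simpa using h
  have := isFreeGroup_comm u v htop huv
  have := congrArg (Subtype.val) this
  simpa using this

/-! ### `SL₂(ℤ)` computations -/

abbrev SL2 := Matrix.SpecialLinearGroup (Fin 2) ℤ

theorem upper_pow (c : ℤ) (n : ℕ) :
    (!![1, c; 0, 1] : Matrix (Fin 2) (Fin 2) ℤ) ^ n = !![1, n * c; 0, 1] := by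
  induction n with
  | zero => simp [Matrix.one_fin_two]
  | succ n ih =>
    rw [pow_succ, ih, Matrix.mul_fin_two]
    norm_num
    ring

theorem lower_pow (c : ℤ) (n : ℕ) :
    (!![1, 0; c, 1] : Matrix (Fin 2) (Fin 2) ℤ) ^ n = !![1, 0; n * c, 1] := by
  induction n with
  | zero => simp [Matrix.one_fin_two]
  | succ n ih =>
    rw [pow_succ, ih, Matrix.mul_fin_two]
    norm_num
    ring

def Amat : SL2 := ⟨!![1, 1; 0, 1], by simp [Matrix.det_fin_two_of]⟩
def Bmat : SL2 := ⟨!![1, 0; 1, 1], by simp [Matrix.det_fin_two_of]⟩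
def Bmat' : SL2 := ⟨!![1, 0; -1, 1], by simp [Matrix.det_fin_two_of]⟩

theorem Bmat_inv : Bmat⁻¹ = Bmat' := by
  apply inv_eq_of_mul_eq_one_right
  ext i j
  fin_cases i <;> fin_cases j <;>
    simp only [Matrix.SpecialLinearGroup.coe_mul, Matrix.SpecialLinearGroup.coe_one] <;>
    simp [Bmat, Bmat', Matrix.mul_fin_two, Matrix.one_fin_two]

theorem sl2_noncomm (i j : ℕ) (hij : i < j) :
    (Bmat ^ i * Amat * (Bmat ^ i)⁻¹) ^ 9 * (Bmat ^ j * Amat * (Bmat ^ j)⁻¹) ^ 10 ≠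
    (Bmat ^ j * Amat * (Bmat ^ j)⁻¹) ^ 10 * (Bmat ^ i * Amat * (Bmat ^ i)⁻¹) ^ 9 := by
  intro hc
  have hconj : ∀ (n m : ℕ), (Bmat ^ n * Amat * (Bmat ^ n)⁻¹) ^ m
      = Bmat ^ n * Amat ^ m * Bmat' ^ n := by
    intro n m
    rw [conj_pow, ← inv_pow, Bmat_inv]
  simp only [hconj] at hc
  have hmc := congrArg (Subtype.val) hc
  simp only [Matrix.SpecialLinearGroup.coe_mul, Matrix.SpecialLinearGroup.coe_pow] at hmc
  simp only [Amat, Bmat, Bmat'] at hmc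
  rw [upper_pow, upper_pow, lower_pow, lower_pow, lower_pow, lower_pow] at hmc
  simp only [Matrix.mul_fin_two] at hmc
  have h00 := congrFun (congrFun hmc 0) 0
  simp [Matrix.cons_val_zero] at h00
  have hij' : (i : ℤ) < (j : ℤ) := by exact_mod_cast hij
  nlinarith [sq_nonneg ((i:ℤ) + j), sq_nonneg ((i:ℤ) - j)]

/-! ### The main theorem -/

set_option maxHeartbeats 1000000 in
set_option maxRecDepth 40000 in
/-- `NE` is not a finite intersection of equational relations. -/
theorem NE_not_finite_inter_equational {α : Type*} [Nontrivial α] :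
    ¬ ∃ (ℓ : ℕ) (E : Fin ℓ → Set (FreeGroup α × FreeGroup α)),
      (∀ a, IsEquational (E a)) ∧ NE (FreeGroup α) = ⋂ a, E a := by
  classical
  rintro ⟨ℓ, E, hEq, hNE⟩
  choose N hN using hEq
  obtain ⟨g₁, g₂, hg⟩ := exists_pair_ne α
  -- the chain of elements
  set c : ℕ → FreeGroup α :=
    fun n => (FreeGroup.of g₂) ^ n * FreeGroup.of g₁ * ((FreeGroup.of g₂) ^ n)⁻¹ with hc
  set q : ℕ → FreeGroup α := fun n => (c n) ^ 90 with hq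
  -- the homomorphism into SL₂(ℤ)
  set ψ : FreeGroup α →* SL2 :=
    FreeGroup.lift (fun z => if z = g₁ then Amat else Bmat) with hψ
  have hA : ψ (FreeGroup.of g₁) = Amat := by simp [hψ]
  have hB : ψ (FreeGroup.of g₂) = Bmat := by simp [hψ, Ne.symm hg]
  have hψc : ∀ n : ℕ, ψ (c n) = Bmat ^ n * Amat * (Bmat ^ n)⁻¹ := by
    intro n
    have hcn : c n = (FreeGroup.of g₂) ^ n * FreeGroup.of g₁ * ((FreeGroup.of g₂) ^ n)⁻¹ := by
      simp only [hc]
    rw [hcn, map_mul, map_mul, map_inv, map_pow, hA, hB]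
  -- membership in the fibers of NE
  have hS : ∀ i j : ℕ, i < j → (q j)⁻¹ ∈ fiber (NE (FreeGroup α)) (q i) := by
    intro i j hij
    refine ⟨(c i) ^ 9, (c j) ^ 10, ?_, ?_⟩
    · show q i * (q j)⁻¹ = (c i ^ 9) ^ 10 * (c j ^ 10) ^ (-9 : ℤ)
      have h1 : (c i ^ 9) ^ 10 = c i ^ 90 := by rw [← pow_mul]
      have h2 : (c j ^ 10) ^ (-9 : ℤ) = (c j ^ 90)⁻¹ := by
        rw [show ((-9 : ℤ)) = -((9 : ℕ) : ℤ) by norm_num, zpow_neg, zpow_natCast, ← pow_mul]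
      simp only [hq]
      rw [h1, h2]
    · intro hcomm
      have hmap := congrArg ψ hcomm
      rw [map_mul, map_mul, map_pow, map_pow, hψc, hψc] at hmap
      exact sl2_noncomm i j hij hmap
  have hS1 : ∀ j : ℕ, (q j)⁻¹ ∉ fiber (NE (FreeGroup α)) (q j) := by
    rintro j ⟨x, y, hxy, hnc⟩
    apply hnc
    apply freeGroup_pow_eq_comm
    have hy9 : y ^ (-9 : ℤ) = (y ^ 9)⁻¹ := by
      rw [show ((-9 : ℤ)) = -((9 : ℕ) : ℤ) by norm_num, zpow_neg, zpow_natCast]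
    rw [hy9, mul_inv_cancel, eq_comm, mul_inv_eq_one] at hxy
    exact hxy
  -- fibers of NE decompose as intersections of fibers of the `E a`
  have hfib : ∀ (p qq : FreeGroup α),
      p ∈ fiber (NE (FreeGroup α)) qq ↔ ∀ a, p ∈ fiber (E a) qq := by
    intro p qq
    simp only [fiber, Set.mem_setOf_eq, hNE, Set.mem_iInter]
  -- choose a responsible equational relation for each step
  have hselx : ∀ j : ℕ, ∃ a, (q (j + 1))⁻¹ ∉ fiber (E a) (q (j + 1)) := by
    intro j
    by_contra hcon
    push_neg at hcon
    exact hS1 (j + 1) ((hfib _ _).mpr hcon)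
  choose sel hsel using hselx
  -- pigeonhole
  obtain ⟨n, hn⟩ : ∃ n : ℕ, n = (∑ a : Fin ℓ, (N a + 1)) + 1 := ⟨_, rfl⟩
  obtain ⟨a, ha⟩ : ∃ a : Fin ℓ,
      N a + 1 ≤ ((Finset.univ : Finset (Fin n)).filter (fun j : Fin n => sel j.val = a)).card := by
    by_contra hcon
    push_neg at hcon
    have hcard : (Finset.univ : Finset (Fin n)).card
        = ∑ a : Fin ℓ, ((Finset.univ : Finset (Fin n)).filter (fun j : Fin n => sel j.val = a)).card :=
      Finset.card_eq_sum_card_fiberwise (fun x _ => Finset.mem_univ _)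
    rw [Finset.card_univ, Fintype.card_fin] at hcard
    have : n ≤ ∑ a : Fin ℓ, N a := by
      rw [hcard]
      exact Finset.sum_le_sum (fun a _ => Nat.lt_succ_iff.mp (hcon a))
    have h2 : ∑ a : Fin ℓ, N a < n := by
      rw [hn]
      have : ∑ a : Fin ℓ, N a ≤ ∑ a : Fin ℓ, (N a + 1) :=
        Finset.sum_le_sum (fun a _ => Nat.le_succ _)
      omega
    omega
  set T : Finset (Fin n) := (Finset.univ : Finset (Fin n)).filter (fun j : Fin n => sel j.val = a)
    with hT
  set k : ℕ := T.card with hk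
  set σ : Fin k ≃o {x // x ∈ T} := T.orderIsoOfFin rfl with hσ
  -- the subsequence
  set r : Fin k → FreeGroup α := fun s => q (((σ s : Fin n) : ℕ) + 1) with hr
  set w : Fin k → FreeGroup α := fun s => (q (((σ s : Fin n) : ℕ) + 1))⁻¹ with hw
  have hsel' : ∀ s : Fin k, sel (σ s : Fin n).val = a := by
    intro s
    exact (Finset.mem_filter.mp (σ s).2).2
  have hK1 : ∀ s : Fin k, w s ∉ fiber (E a) (r s) := by
    intro s
    rw [← hsel' s]
    exact hsel _
  have hK2 : ∀ s t : Fin k, t < s → w s ∈ fiber (E a) (r t) := by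
    intro s t hts
    have hlt : ((σ t : Fin n) : ℕ) + 1 < ((σ s : Fin n) : ℕ) + 1 := by
      have := σ.strictMono hts
      have : (σ t : Fin n) < (σ s : Fin n) := this
      omega
    exact (hfib _ _).mp (hS _ _ hlt) a
  -- the strictly decreasing chain for `E a`
  have hSA : StrictAnti (fun s : Fin k => ⋂ t ∈ Finset.Iic s, fiber (E a) (r t)) := by
    intro s s' hss'
    constructor
    · intro x hx
      simp only [Set.mem_iInter] at hx ⊢
      intro t ht
      exact hx t (Finset.mem_Iic.mpr (le_trans (Finset.mem_Iic.mp ht) (le_of_lt hss')))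
    · intro hsub
      have hw_in : w s' ∈ ⋂ t ∈ Finset.Iic s, fiber (E a) (r t) := by
        simp only [Set.mem_iInter]
        intro t ht
        exact hK2 s' t (lt_of_le_of_lt (Finset.mem_Iic.mp ht) hss')
      have hw_out : w s' ∉ ⋂ t ∈ Finset.Iic s', fiber (E a) (r t) := by
        intro hmem
        simp only [Set.mem_iInter] at hmem
        exact hK1 s' (hmem s' (Finset.mem_Iic.mpr (le_refl s')))
      exact hw_out (hsub hw_in)
  have := hN a k r hSA
  omega
end

section
/- Let F be a free group. If a, b ∈ F and there exist nonzero integers m, n such that a^m·b^n = b^n·a^m, then a·b = b·a. -/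
namespace FGAux
open FreeGroup List

variable {α : Type*}

/-- Non-cancelling adjacency. -/
def NC (p q : α × Bool) : Prop := ¬(p.1 = q.1 ∧ p.2 = !q.2)

def Reduced (L : List (α × Bool)) : Prop := List.Chain' NC L

theorem reduce_eq_self_of_reduced [DecidableEq α] :
    ∀ {L : List (α × Bool)}, Reduced L → FreeGroup.reduce L = L := by
  intro L h
  induction L with
  | nil => rfl
  | cons x L ih =>
    have hL : Reduced L := h.tail
    rw [FreeGroup.reduce.cons, ih hL]
    cases L with
    | nil => rfl
    | cons hd tl =>
      have : NC x hd := (List.isChain_cons_cons.1 h).1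
      simp only [NC] at this
      simp [this]

theorem reduced_of_reduce_eq_self [DecidableEq α] :
    ∀ {L : List (α × Bool)}, FreeGroup.reduce L = L → Reduced L := by
  intro L h
  induction L with
  | nil => exact List.isChain_nil
  | cons x L ih =>
    have hlen : (FreeGroup.reduce L).length ≤ L.length :=
      FreeGroup.Red.length_le (FreeGroup.reduce.red)
    rw [FreeGroup.reduce.cons] at h
    rcases hr : FreeGroup.reduce L with _ | ⟨hd, tl⟩
    · rw [hr] at h
      simp only [List.casesOn] at h
      have hL : [] = L := by injection h
      subst hL
      exact List.isChain_singleton x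
    · rw [hr] at h hlen
      dsimp only at h
      by_cases hc : x.1 = hd.1 ∧ x.2 = !hd.2
      · rw [if_pos hc] at h
        have h1 : tl.length = L.length + 1 := by simpa using congrArg List.length h
        have h2 : tl.length + 1 ≤ L.length := by simpa using hlen
        omega
      · rw [if_neg hc] at h
        have hL : L = hd :: tl := by
          have := (List.cons.injEq _ _ _ _).mp h
          exact this.2.symm ▸ rfl
        subst hL
        exact List.isChain_cons_cons.2 ⟨hc, ih hr⟩

theorem toWord_mk_of_reduced [DecidableEq α] {L : List (α × Bool)} (h : Reduced L) :
    (FreeGroup.mk L).toWord = L := by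
  rw [FreeGroup.toWord_mk, reduce_eq_self_of_reduced h]

theorem reduced_toWord' [DecidableEq α] (x : FreeGroup α) : Reduced x.toWord :=
  reduced_of_reduce_eq_self (FreeGroup.reduce_toWord x)


/-- `N` concatenated copies of `c`. -/
def W (c : List (α × Bool)) (N : ℕ) : List (α × Bool) := (List.replicate N c).flatten

theorem W_zero (c : List (α × Bool)) : W c 0 = [] := rfl

theorem W_succ (c : List (α × Bool)) (N : ℕ) : W c (N + 1) = c ++ W c N := by
  simp [W, List.replicate_succ]

theorem W_succ' (c : List (α × Bool)) (N : ℕ) : W c (N + 1) = W c N ++ c := by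
  simp [W, List.replicate_succ']

theorem W_length (c : List (α × Bool)) (N : ℕ) : (W c N).length = N * c.length := by
  simp [W, Nat.mul_comm]

theorem mk_pow (c : List (α × Bool)) (N : ℕ) : FreeGroup.mk c ^ N = FreeGroup.mk (W c N) :=
  FreeGroup.pow_mk N

theorem W_head? {c : List (α × Bool)} (hc : c ≠ []) (N : ℕ) :
    (W c (N + 1)).head? = c.head? := by
  rw [W_succ]
  cases c with
  | nil => exact absurd rfl hc
  | cons x t => rfl

theorem W_getLast? {c : List (α × Bool)} (hc : c ≠ []) (N : ℕ) :
    (W c (N + 1)).getLast? = c.getLast? := by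
  rw [W_succ']
  exact List.getLast?_append_of_ne_nil _ hc

/-- Cyclically reduced word. -/
def CycRed (c : List (α × Bool)) : Prop :=
  Reduced c ∧ ∀ p ∈ c.getLast?, ∀ q ∈ c.head?, NC p q

theorem reduced_W {c : List (α × Bool)} (h : CycRed c) (N : ℕ) : Reduced (W c N) := by
  induction N with
  | zero => exact List.isChain_nil
  | succ N ih =>
    rw [W_succ]
    refine List.isChain_append.2 ⟨h.1, ih, ?_⟩
    intro p hp q hq
    rcases N with _ | N
    · simp [W_zero] at hq
    · rcases eq_or_ne c [] with rfl | hc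
      · simp at hp
      · rw [W_head? hc] at hq
        exact h.2 p hp q hq

theorem invRev_cons (p : α × Bool) (u : List (α × Bool)) :
    FreeGroup.invRev (p :: u) = FreeGroup.invRev u ++ [(p.1, !p.2)] := by
  simp [FreeGroup.invRev]

/-- Every reduced word is of the form `u ++ c ++ invRev u` with `c` cyclically reduced. -/
theorem decomp : ∀ (n : ℕ) (w : List (α × Bool)), w.length ≤ n → Reduced w →
    ∃ u c, w = u ++ c ++ FreeGroup.invRev u ∧ CycRed c := by
  intro n
  induction n with
  | zero =>
    intro w hw _
    have : w = [] := List.length_eq_zero_iff.mp (Nat.le_zero.mp hw)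
    subst this
    exact ⟨[], [], by simp [FreeGroup.invRev], List.isChain_nil, by simp⟩
  | succ n ih =>
    intro w hw hred
    by_cases hcyc : ∀ p ∈ w.getLast?, ∀ q ∈ w.head?, NC p q
    · exact ⟨[], w, by simp [FreeGroup.invRev], hred, hcyc⟩
    · push_neg at hcyc
      obtain ⟨p, hp, q, hq, hpq⟩ := hcyc
      simp only [NC, not_not] at hpq
      cases w with
      | nil => simp at hq
      | cons q' w' =>
        have hq' : q' = q := by simpa using hq
        subst hq'
        cases eq_or_ne w' [] with
        | inl h' =>
          subst h'
          have : q' = p := by simpa using hp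
          subst this
          simp at hpq
        | inr h' =>
          obtain ⟨w₂, p', rfl⟩ := List.eq_nil_or_concat w' |>.resolve_left h'
          rw [List.concat_eq_append] at hp hq hred hw ⊢
          have hp' : p' = p := by
            have := hp
            rw [show q' :: (w₂ ++ [p']) = (q' :: w₂) ++ [p'] from rfl,
              List.getLast?_concat] at this
            simpa using this
          subst hp'
          have hred2 : Reduced w₂ := hred.infix ⟨[q'], [p'], by simp⟩
          have hlen : w₂.length ≤ n := by
            simp at hw; omega
          obtain ⟨u', c, rfl, hc⟩ := ih w₂ hlen hred2
          refine ⟨q' :: u', c, ?_, hc⟩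
          rw [invRev_cons]
          have hp'eq : p' = (q'.1, !q'.2) := by
            rcases hpq with ⟨h1, h2⟩
            ext
            · exact h1
            · exact h2
          rw [hp'eq]
          simp


theorem mk_append_invRev (u : List (α × Bool)) : FreeGroup.mk (u ++ FreeGroup.invRev u) = 1 := by
  rw [← FreeGroup.mul_mk, ← FreeGroup.inv_mk, mul_inv_cancel]

theorem reduced_conj_W {u c : List (α × Bool)}
    (hred : Reduced (u ++ c ++ FreeGroup.invRev u)) (hc : CycRed c) (hcne : c ≠ [])
    (N : ℕ) (hN : 1 ≤ N) : Reduced (u ++ W c N ++ FreeGroup.invRev u) := by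
  unfold Reduced at hred ⊢
  rw [List.append_assoc] at hred ⊢
  unfold List.Chain' at hred ⊢
  rw [List.isChain_append] at hred ⊢
  obtain ⟨h1, h2, h3⟩ := hred
  rw [List.isChain_append] at h2
  obtain ⟨h4, h5, h6⟩ := h2
  obtain ⟨M, rfl⟩ : ∃ M, N = M + 1 := ⟨N - 1, by omega⟩
  refine ⟨h1, List.isChain_append.2 ⟨reduced_W hc _, h5, ?_⟩, ?_⟩
  · intro p hp q hq
    rw [W_getLast? hcne] at hp
    exact h6 p hp q hq
  · intro p hp q hq
    refine h3 p hp q ?_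
    rw [W_succ, List.append_assoc, List.head?_append_of_ne_nil _ hcne] at hq
    rw [List.head?_append_of_ne_nil _ hcne]
    exact hq

theorem toWord_conj_pow [DecidableEq α] {u c : List (α × Bool)}
    (hred : Reduced (u ++ c ++ FreeGroup.invRev u)) (hc : CycRed c) (hcne : c ≠ [])
    (N : ℕ) (hN : 1 ≤ N) :
    (FreeGroup.mk u * FreeGroup.mk c ^ N * (FreeGroup.mk u)⁻¹).toWord
      = u ++ W c N ++ FreeGroup.invRev u := by
  rw [mk_pow, FreeGroup.inv_mk, FreeGroup.mul_mk, FreeGroup.mul_mk]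
  exact toWord_mk_of_reduced (reduced_conj_W hred hc hcne N hN)

theorem eq_of_pow_eq_pow [DecidableEq α] (x y : FreeGroup α) (N : ℕ) (hN : 1 ≤ N)
    (h : x ^ N = y ^ N) : x = y := by
  obtain ⟨u, c, hx, hc⟩ := decomp x.toWord.length x.toWord le_rfl (reduced_toWord' x)
  obtain ⟨v, d, hy, hd⟩ := decomp y.toWord.length y.toWord le_rfl (reduced_toWord' y)
  have hxe : x = FreeGroup.mk u * FreeGroup.mk c * (FreeGroup.mk u)⁻¹ := by
    rw [FreeGroup.inv_mk, FreeGroup.mul_mk, FreeGroup.mul_mk, ← hx, FreeGroup.mk_toWord]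
  have hye : y = FreeGroup.mk v * FreeGroup.mk d * (FreeGroup.mk v)⁻¹ := by
    rw [FreeGroup.inv_mk, FreeGroup.mul_mk, FreeGroup.mul_mk, ← hy, FreeGroup.mk_toWord]
  have hredx : Reduced (u ++ c ++ FreeGroup.invRev u) := hx ▸ reduced_toWord' x
  have hredy : Reduced (v ++ d ++ FreeGroup.invRev v) := hy ▸ reduced_toWord' y
  -- the case of a trivial cyclic part
  by_cases hcne : c = []
  · subst hcne
    have hx1 : x = 1 := by
      rw [hxe, ← FreeGroup.one_eq_mk]; simp [FreeGroup.mul_mk, mk_append_invRev]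
    rw [hx1] at h ⊢
    by_cases hdne : d = []
    · subst hdne
      rw [hye, ← FreeGroup.one_eq_mk]; simp [FreeGroup.mul_mk, mk_append_invRev]
    · exfalso
      have hyN : y ^ N = 1 := by rw [← h, one_pow]
      have := congrArg FreeGroup.toWord hyN
      rw [hye, conj_pow, toWord_conj_pow hredy hd hdne N hN, FreeGroup.toWord_one] at this
      have := congrArg List.length this
      simp [W_length] at this
      rcases this.2.1 with h' | h'
      · omega
      · exact hdne h'
  by_cases hdne : d = []
  · exfalso
    subst hdne
    have hy1 : y = 1 := by
      rw [hye, ← FreeGroup.one_eq_mk]; simp [FreeGroup.mul_mk, mk_append_invRev]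
    rw [hy1] at h
    have hxN : x ^ N = 1 := by rw [h, one_pow]
    have := congrArg FreeGroup.toWord hxN
    rw [hxe, conj_pow, toWord_conj_pow hredx hc hcne N hN, FreeGroup.toWord_one] at this
    have := congrArg List.length this
    simp [W_length] at this
    rcases this.2.1 with h' | h'
    · omega
    · exact hcne h'
  -- both nontrivial: compare words at exponents N and 2N
  have hpow : ∀ k : ℕ, 1 ≤ k →
      u ++ W c (N * k) ++ FreeGroup.invRev u = v ++ W d (N * k) ++ FreeGroup.invRev v := by
    intro k hk
    have hNk : 1 ≤ N * k := Nat.one_le_iff_ne_zero.2 (by positivity)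
    have hxy : x ^ (N * k) = y ^ (N * k) := by
      rw [pow_mul, pow_mul, h]
    have := congrArg FreeGroup.toWord hxy
    rwa [hxe, hye, conj_pow, conj_pow, toWord_conj_pow hredx hc hcne _ hNk,
      toWord_conj_pow hredy hd hdne _ hNk] at this
  have h1 := hpow 1 le_rfl
  have h2 := hpow 2 one_le_two
  have hl1 := congrArg List.length h1
  have hl2 := congrArg List.length h2
  simp only [List.length_append, W_length, FreeGroup.invRev_length] at hl1 hl2
  have hcd : c.length = d.length := by
    have e1 : N * 1 * c.length = (N * c.length) * 1 := by ring
    have e2 : N * 2 * c.length = (N * c.length) * 2 := by ring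
    have e3 : N * 1 * d.length = (N * d.length) * 1 := by ring
    have e4 : N * 2 * d.length = (N * d.length) * 2 := by ring
    rw [e1, e3] at hl1
    rw [e2, e4] at hl2
    have : N * c.length = N * d.length := by omega
    exact Nat.eq_of_mul_eq_mul_left (by omega) this
  have huv : u.length = v.length := by
    rw [hcd] at hl1
    omega
  -- split the word equality
  rw [List.append_assoc, List.append_assoc] at h1
  obtain ⟨rfl, h1'⟩ := List.append_inj h1 huv
  obtain ⟨hW, -⟩ := List.append_inj h1' (by rw [W_length, W_length, hcd])
  have hcd2 : c = d := by
    have := hW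
    rw [show N * 1 = (N - 1) + 1 by omega, W_succ, W_succ] at this
    exact (List.append_inj this hcd).1
  rw [hxe, hye, hcd2]

theorem eq_of_zpow_eq_zpow [DecidableEq α] (x y : FreeGroup α) (n : ℤ) (hn : n ≠ 0)
    (h : x ^ n = y ^ n) : x = y := by
  rcases hn.lt_or_gt with hneg | hpos
  · obtain ⟨N, hN⟩ : ∃ N : ℕ, -n = (N : ℤ) := ⟨(-n).toNat, by omega⟩
    have h' : x ^ (N : ℤ) = y ^ (N : ℤ) := by
      rw [← hN, zpow_neg, zpow_neg, h]
    rw [zpow_natCast, zpow_natCast] at h'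
    exact eq_of_pow_eq_pow x y N (by omega) h'
  · obtain ⟨N, hN⟩ : ∃ N : ℕ, n = (N : ℤ) := ⟨n.toNat, by omega⟩
    subst hN
    rw [zpow_natCast, zpow_natCast] at h
    exact eq_of_pow_eq_pow x y N (by exact_mod_cast hpos) h

end FGAux

/-- In a free group, if nonzero powers `a^m` and `b^n` commute, then `a` and `b` commute. -/
theorem FreeGroup.commute_of_zpow_commute {α : Type*} (a b : FreeGroup α) (m n : ℤ)
    (hm : m ≠ 0) (hn : n ≠ 0) (h : a ^ m * b ^ n = b ^ n * a ^ m) : a * b = b * a := by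
  classical
  have key : (a ^ m * b * (a ^ m)⁻¹) ^ n = b ^ n := by
    rw [conj_zpow, h, mul_inv_cancel_right]
  have h1 : a ^ m * b * (a ^ m)⁻¹ = b := FGAux.eq_of_zpow_eq_zpow _ _ n hn key
  have hcomm : a ^ m * b = b * a ^ m := mul_inv_eq_iff_eq_mul.mp h1
  have key2 : (b * a * b⁻¹) ^ m = a ^ m := by
    rw [conj_zpow, ← hcomm, mul_inv_cancel_right]
  have h2 : b * a * b⁻¹ = a := FGAux.eq_of_zpow_eq_zpow _ _ m hm key2
  exact (mul_inv_eq_iff_eq_mul.mp h2).symm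
end
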